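/- In the setting of the paper with conditions 1⁰–11⁰, for any subgroup F with H ≤ F ≤ G, the groups G(K(F)) and F contain exactly the same transvections, i.e., for all i ≠ j and x ≤ e_j, H_{ij}(x) ∩ F = H_{ij}(x) ∩ G(K(F)). -/

import Mathlib

open Finset

/-- The group of lattice automorphisms of `L` (order automorphisms), with composition as
multiplication. -/
instance latticeAutGroup {L : Type*} [Lattice L] : Group (L ≃o L) where
  mul f g := g.trans f
  one := OrderIso.refl L
  inv := OrderIso.symm
  mul_assoc f g h := rfl
  one_mul f := rfl
  mul_one f := rfl
  inv_mul_cancel f := by ext x; exact f.symm_apply_apply x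

variable {L : Type*} [CompleteLattice L] {n : ℕ}

/-- `ê i`: the join of all the atoms `e j`, `j ≠ i`. -/
def hatE (e : Fin n → L) (i : Fin n) : L := ((univ : Finset (Fin n)).erase i).sup e

/-- The `i`-th component of the support: `[x]ᵢ = (x ⊔ êᵢ) ⊓ eᵢ`. -/
def sc (e : Fin n → L) (x : L) (i : Fin n) : L := (x ⊔ hatE e i) ⊓ e i

/-- The set `L̄₀` of all elements of the form `x₁ ⊔ ⋯ ⊔ xₙ` with `xᵢ ≤ eᵢ`. -/
def L0bar (e : Fin n → L) : Set L :=
  {x | ∃ y : Fin n → L, (∀ i, y i ≤ e i) ∧ x = (univ : Finset (Fin n)).sup y}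

/-- `H = G(L₀)`: the elements of `G` fixing the sublattice `L₀` generated by the atoms
`e₁, …, eₙ` (together with `⊥`, `⊤`) pointwise; equivalently, fixing every `e i`. -/
def Hset (e : Fin n → L) (G : Subgroup (L ≃o L)) : Set (L ≃o L) :=
  {g | g ∈ G ∧ ∀ i, g (e i) = e i}

/-- `L₀′ = L(H)`: the sublattice of elements fixed by every element of `H`. -/
def L0' (e : Fin n → L) (G : Subgroup (L ≃o L)) : Set L :=
  {x | ∀ h ∈ Hset e G, h x = x}

/-- `Hᵢ`: the automorphisms in `H` which fix every `x ∈ L` with `[x]ᵢ = ⊥`. -/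
def HiSet (e : Fin n → L) (G : Subgroup (L ≃o L)) (i : Fin n) : Set (L ≃o L) :=
  {h | h ∈ Hset e G ∧ ∀ x : L, sc e x i = ⊥ → h x = x}

/-- The set `H_{ij}(x)` of transvections: elements `f ∈ G` such that
(1) `f y = y` for every `s ≠ i` and `y ≤ e s`;
(2) `[f y]ᵢ = y` for every `y ≤ eᵢ`;
(3) `[f eᵢ]ₖ = ⊥` for `k ∉ {i,j}`, `[f eᵢ]ᵢ = eᵢ` and `[f eᵢ]ⱼ = x`. -/
def Hij (e : Fin n → L) (G : Subgroup (L ≃o L)) (i j : Fin n) (x : L) : Set (L ≃o L) :=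
  {f | f ∈ G ∧
       (∀ s, s ≠ i → ∀ y, y ≤ e s → f y = y) ∧
       (∀ y, y ≤ e i → sc e (f y) i = y) ∧
       (∀ k, k ≠ i → k ≠ j → sc e (f (e i)) k = ⊥) ∧
       sc e (f (e i)) i = e i ∧ sc e (f (e i)) j = x}

/-- `G(S)`: the pointwise stabilizer in `G` of a set `S ⊆ L`. -/
def GFix (G : Subgroup (L ≃o L)) (S : Set L) : Set (L ≃o L) :=
  {g | g ∈ G ∧ ∀ x ∈ S, g x = x}

/-- The sublattice of `L` generated by a set `S` (the smallest subset containing `S` closed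
under `⊔` and `⊓`). -/
def latClosure (S : Set L) : Set L :=
  ⋂₀ {T : Set L | S ⊆ T ∧ ∀ a ∈ T, ∀ b ∈ T, a ⊔ b ∈ T ∧ a ⊓ b ∈ T}

/-- The ideal of transvections `σ_{ij}(F)`: for `i ≠ j`, the join of all `x ≤ eⱼ` with
`H_{ij}(x) ∩ F ≠ ∅`; and `σ_{ii} = eᵢ`. -/
def sigmaF (e : Fin n → L) (G : Subgroup (L ≃o L)) (F : Subgroup (L ≃o L))
    (i j : Fin n) : L :=
  if i = j then e i
  else sSup {x | x ≤ e j ∧ (Hij e G i j x ∩ (F : Set (L ≃o L))).Nonempty}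

/-- A net collection in `L₀′`: a family `(τ_{ij})` with `τ_{ij} ≤ eⱼ`, `τ_{ii} = eᵢ`,
`τ_{ij} ∈ L₀′`, and such that for every `g ∈ G`:
`[g eᵢ]ⱼ ≤ τ_{ij}` for all `i, j` iff `[g τ_{ki}]ⱼ ≤ τ_{kj}` for all `i, j, k`. -/
def IsNetCollection (e : Fin n → L) (G : Subgroup (L ≃o L)) (τ : Fin n → Fin n → L) : Prop :=
  (∀ i j, τ i j ≤ e j) ∧
  (∀ i, τ i i = e i) ∧
  (∀ i j, τ i j ∈ L0' e G) ∧
  (∀ g ∈ G, (∀ i j, sc e (g (e i)) j ≤ τ i j) ↔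
      (∀ i j k, sc e (g (τ k i)) j ≤ τ k j))

/-- The sublattice `K_τ` of `L₀′` generated by `⊥` and the elements `⨆ⱼ τ_{ij}`. -/
def Kτ (τ : Fin n → Fin n → L) : Set L :=
  latClosure ({⊥} ∪ Set.range fun i => (univ : Finset (Fin n)).sup (τ i))

/-- **The conditions 1⁰–11⁰ of the paper** for the data: a modular lattice `L` of finite
length, the atoms `e₁, …, eₙ` of a Boolean sublattice `L₀` with the same `⊥` and `⊤` as `L`,
a subgroup `G ≤ Aut L`, and the common value `m` of the dimension on the atoms. -/
structure PaperConditions (e : Fin n → L) (G : Subgroup (L ≃o L)) (m : ℕ) : Prop where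
  /-- `L₀` is a Boolean algebra with atoms `e₁, …, eₙ`: the atoms are nonzero, -/
  atom_ne_bot : ∀ i, e i ≠ ⊥
  /-- independent (`eᵢ ⊓ êᵢ = ⊥`), -/
  indep : ∀ i, e i ⊓ hatE e i = ⊥
  /-- and (condition `1⁰`) `1_{L₀} = 1_L`, i.e. `⨆ᵢ eᵢ = ⊤` (also `0_{L₀} = 0_L = ⊥`). -/
  sup_eq_top : (univ : Finset (Fin n)).sup e = ⊤
  /-- Condition `2⁰`: the dimension function is constant, with value `m`, on the atoms. -/
  height_atom : ∀ i, Order.height (e i) = (m : ℕ∞)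
  /-- Condition `3⁰`. -/
  c3 : ∀ a ∈ G, ∀ i, sc e ((a : L ≃o L) (e i)) i = e i →
      ∃ h ∈ HiSet e G i, ∀ y, y ≤ e i →
        sc e (h ((a : L ≃o L) y)) i = y ∧ sc e ((a : L ≃o L) (h y)) i = y
  /-- Condition `4⁰`. -/
  c4 : ∀ t i : Fin n, ∃ h, h ∈ HiSet e G t ∧ (∀ z ∈ L0bar e, h z = z) ∧
      ∀ a ∈ G, ∀ r, r ≠ i → ∀ y, y ≤ e i →
        sc e ((a : L ≃o L) (h ((a : L ≃o L).symm y))) r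
          = sc e ((a : L ≃o L) (sc e ((a : L ≃o L).symm y) t)) r
  /-- Condition `5⁰`. -/
  c5 : ∀ u ∈ L0bar e, ∀ i, e i ≤ u → ∀ g ∈ G, sc e ((g : L ≃o L) u) i = e i →
      ∃ t ∈ G, sc e ((g : L ≃o L) ((t : L ≃o L) (e i))) i = e i ∧
        (∀ s, s ≠ i → (t : L ≃o L) (e s) = e s) ∧
        ∀ j, sc e ((t : L ≃o L) (e i)) j ≤ sc e u j
  /-- Condition `6⁰`. -/
  c6 : ∀ f ∈ G, ∀ g ∈ G, ∀ i j : Fin n,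
      sc e ((f : L ≃o L) (e i)) j ≤ sc e ((g : L ≃o L) (e i)) j →
      ∀ x ∈ L0' e G, x ≤ e i → sc e ((f : L ≃o L) x) j ≤ sc e ((g : L ≃o L) x) j
  /-- Condition `7⁰`. -/
  c7 : ∀ j : Fin n, ∀ u, u ≤ e j → ∀ i, i ≠ j →
      ∃ (s : ℕ) (y : Fin s → L), (∀ r, y r ≤ e j) ∧
        u = (univ : Finset (Fin s)).sup y ∧ ∀ r, (Hij e G i j (y r)).Nonempty
  /-- Condition `8⁰`. -/
  c8 : ∀ f ∈ G, ∀ i j : Fin n, i ≠ j →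
      ∃ g ∈ Hij e G i j (sc e ((f : L ≃o L) (e i)) j),
        ∀ u, u ≤ e i → sc e (g u) j = sc e ((f : L ≃o L) u) j
  /-- Condition `9⁰`. -/
  c9 : ∀ i j : Fin n, i ≠ j → ∀ x, x ≤ e j → ∀ w : L,
      Order.height w = (m : ℕ∞) →
      sc e w i = e i → sc e w j = x → (∀ k, k ≠ i → k ≠ j → sc e w k = ⊥) →
      (Hij e G i j x).Nonempty → ∃ t ∈ Hij e G i j x, t w = e i
  /-- Condition `10⁰`. -/
  c10 : ∀ i j : Fin n, i ≠ j → ∀ (s : ℕ) (xs : Fin s → L) (a : Fin s → (L ≃o L)),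
      (∀ r, a r ∈ Hij e G i j (xs r)) →
      ∀ y, y ≤ (univ : Finset (Fin s)).sup xs → (Hij e G i j y).Nonempty →
      Hij e G i j y ⊆ ↑(Subgroup.closure (Hset e G ∪ Set.range a))
  /-- Condition `11⁰`. -/
  c11 : ∀ a ∈ G, ∀ t : Fin n, ∀ i j : Fin n, i ≠ j → ∀ h ∈ HiSet e G t,
      (Hij e G i j (sc e ((a : L ≃o L) (h ((a : L ≃o L).symm (e i)))) j) ∩
        ↑(Subgroup.closure (insert (a : L ≃o L) (Hset e G)))).Nonempty

-- helper lemmas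
lemma aux_mul_apply (f g : L ≃o L) (x : L) : (f * g) x = f (g x) := rfl

lemma aux_inv_apply (f : L ≃o L) (x : L) : (f⁻¹) x = f.symm x := rfl

lemma aux_le_hatE (e : Fin n → L) {t s : Fin n} (h : t ≠ s) : e t ≤ hatE e s :=
  Finset.le_sup (Finset.mem_erase.2 ⟨h, mem_univ t⟩)

lemma aux_sc_le (e : Fin n → L) (u : L) (t : Fin n) : sc e u t ≤ e t := inf_le_right

lemma aux_sc_mono (e : Fin n → L) {u v : L} (h : u ≤ v) (t : Fin n) :
    sc e u t ≤ sc e v t := inf_le_inf_right _ (sup_le_sup_right h _)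

lemma aux_sc_of_le [IsModularLattice L] {e : Fin n → L}
    (hind : ∀ i, e i ⊓ hatE e i = ⊥) {u : L} {j : Fin n} (hu : u ≤ e j) :
    sc e u j = u := by
  rw [sc, sup_inf_assoc_of_le _ hu, inf_comm, hind j, sup_bot_eq]

lemma aux_sc_sup_hat [IsModularLattice L] {e : Fin n → L}
    (hind : ∀ i, e i ⊓ hatE e i = ⊥) {v : L} {j : Fin n} (hv : v ≤ e j) :
    sc e (v ⊔ hatE e j) j = v := by
  rw [sc, sup_assoc, sup_idem, sup_inf_assoc_of_le _ hv, inf_comm, hind j, sup_bot_eq]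

lemma aux_two_block [IsModularLattice L] {u p q : L} (h : u ≤ p ⊔ q) :
    u ≤ ((u ⊔ q) ⊓ p) ⊔ ((u ⊔ p) ⊓ q) := by
  have h1 : ((u ⊔ q) ⊓ p) ⊔ ((u ⊔ p) ⊓ q) = (((u ⊔ q) ⊓ p) ⊔ q) ⊓ (u ⊔ p) := by
    rw [inf_comm (u ⊔ p) q, sup_inf_assoc_of_le _ (le_trans inf_le_right le_sup_right)]
  have h2 : ((u ⊔ q) ⊓ p) ⊔ q = (q ⊔ p) ⊓ (u ⊔ q) := by
    rw [sup_comm, inf_comm (u ⊔ q) p, sup_inf_assoc_of_le _ le_sup_right]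
  rw [h1, h2]
  exact le_inf (le_inf (le_trans h (by rw [sup_comm])) le_sup_left) le_sup_left

lemma aux_supp_finset [IsModularLattice L] (e : Fin n → L) :
    ∀ (s : Finset (Fin n)) (u : L), u ≤ s.sup e →
      u ≤ s.sup (fun t => (u ⊔ (s.erase t).sup e) ⊓ e t) := by
  intro s
  induction s using Finset.induction_on with
  | empty => intro u hu; simpa using hu
  | @insert i s hi ih =>
    intro u hu
    rw [Finset.sup_insert] at hu
    have key := aux_two_block (p := e i) (q := s.sup e) hu
    have h1 : (u ⊔ s.sup e) ⊓ e i ≤ (insert i s).sup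
        (fun t => (u ⊔ ((insert i s).erase t).sup e) ⊓ e t) := by
      refine le_trans ?_ (Finset.le_sup (mem_insert_self i s))
      rw [Finset.erase_insert hi]
    have h2 : (u ⊔ e i) ⊓ s.sup e ≤ (insert i s).sup
        (fun t => (u ⊔ ((insert i s).erase t).sup e) ⊓ e t) := by
      refine le_trans (ih ((u ⊔ e i) ⊓ s.sup e) inf_le_right) ?_
      refine Finset.sup_le fun t ht => ?_
      have hit : i ≠ t := fun hc => hi (hc ▸ ht)
      have hei : e i ≤ ((insert i s).erase t).sup e :=
        Finset.le_sup (Finset.mem_erase.2 ⟨hit, mem_insert_self i s⟩)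
      have hsub : (s.erase t).sup e ≤ ((insert i s).erase t).sup e :=
        Finset.sup_mono (fun b hb => Finset.mem_erase.2
          ⟨(Finset.mem_erase.1 hb).1, mem_insert_of_mem (Finset.mem_erase.1 hb).2⟩)
      refine le_trans ?_ (Finset.le_sup (mem_insert_of_mem ht))
      exact inf_le_inf_right _ (sup_le
        (inf_le_left.trans (sup_le le_sup_left (hei.trans le_sup_right)))
        (hsub.trans le_sup_right))
    exact le_trans key (sup_le h1 h2)

lemma aux_supp [IsModularLattice L] {e : Fin n → L}
    (htop : (univ : Finset (Fin n)).sup e = ⊤) (u : L) :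
    u ≤ (univ : Finset (Fin n)).sup (fun t => sc e u t) := by
  have := aux_supp_finset e univ u (by rw [htop]; exact le_top)
  exact this

lemma aux_fix_of_le [WellFoundedLT L] (f : L ≃o L) {c : L} (h : f c ≤ c) : f c = c := by
  by_contra hne
  have hlt : f c < c := lt_of_le_of_ne h hne
  have key : ∀ m : ℕ, (⇑f)^[m+1] c < (⇑f)^[m] c := by
    intro m
    induction m with
    | zero => simpa using hlt
    | succ k ihk =>
      calc (⇑f)^[k+1+1] c = f ((⇑f)^[k+1] c) := Function.iterate_succ_apply' _ _ _
        _ < f ((⇑f)^[k] c) := f.strictMono ihk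
        _ = (⇑f)^[k+1] c := (Function.iterate_succ_apply' _ _ _).symm
  exact (RelEmbedding.natGT (fun m => (⇑f)^[m] c) key).not_wellFounded
    (IsWellFounded.wf)


lemma aux_sigma_le (e : Fin n → L) (G F : Subgroup (L ≃o L)) (k t : Fin n) :
    sigmaF e G F k t ≤ e t := by
  rw [sigmaF]
  split
  · next h => exact le_of_eq (by rw [h])
  · exact sSup_le fun x hx => hx.1

lemma aux_core [IsModularLattice L]
    {e : Fin n → L} {G F : Subgroup (L ≃o L)} {m : ℕ}
    (hc : PaperConditions e G m) (hHF : Hset e G ⊆ (F : Set (L ≃o L))) (hFG : F ≤ G)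
    {i j k : Fin n} (hki : k ≠ i) (hkj : k ≠ j)
    {x y : L} {f : L ≃o L} (hf : f ∈ Hij e G i j x) (hfF : f ∈ F)
    {a' : L ≃o L} (ha' : a' ∈ Hij e G k i y) (ha'F : a' ∈ F) :
    sc e (f y) j ≤ sigmaF e G F k j := by
  have hyi : y ≤ e i := ha'.2.2.2.2.2 ▸ aux_sc_le e (a' (e k)) i
  set a : L ≃o L := f * a'⁻¹ with ha_def
  have haF : a ∈ F := mul_mem hfF (inv_mem ha'F)
  have haG : a ∈ G := hFG haF
  obtain ⟨h, hh, -, hkey⟩ := hc.c4 i k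
  have hfek : f (e k) = e k := hf.2.1 k hki (e k) le_rfl
  have hfsk : f.symm (e k) = e k := f.symm_apply_eq.2 hfek.symm
  have hsymm : a.symm (e k) = a' (e k) := by
    have h1 : a.symm = a⁻¹ := rfl
    rw [h1, ha_def, mul_inv_rev, inv_inv, aux_mul_apply, aux_inv_apply, hfsk]
  have ha'y : a' y = y := ha'.2.1 i (Ne.symm hki) y hyi
  have hsy : a'.symm y = y := a'.symm_apply_eq.2 ha'y.symm
  have hay : a y = f y := by rw [ha_def, aux_mul_apply, aux_inv_apply, hsy]
  have h2 := hkey a haG j (Ne.symm hkj) (e k) le_rfl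
  rw [hsymm, ha'.2.2.2.2.2, hay] at h2
  obtain ⟨w, hw, hwcl⟩ := hc.c11 a haG i k j hkj h hh
  have hclF : Subgroup.closure (insert (a : L ≃o L) (Hset e G)) ≤ F :=
    (Subgroup.closure_le F).2 (Set.insert_subset_iff.2 ⟨haF, hHF⟩)
  rw [sigmaF, if_neg hkj]
  refine le_sSup ?_
  rw [← h2]
  exact ⟨aux_sc_le e _ j, ⟨w, by rwa [hsymm] at hw, hclF hwcl⟩⟩

lemma aux_fix_ck [IsModularLattice L] [WellFoundedLT L] [WellFoundedGT L]
    {e : Fin n → L} {G F : Subgroup (L ≃o L)} {m : ℕ}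
    (hc : PaperConditions e G m) (hHF : Hset e G ⊆ (F : Set (L ≃o L))) (hFG : F ≤ G)
    {i j : Fin n} (hij : i ≠ j) {x : L} (hx : x ≤ e j)
    {f : L ≃o L} (hf : f ∈ Hij e G i j x) (hfF : f ∈ F) (k : Fin n) :
    f ((univ : Finset (Fin n)).sup (sigmaF e G F k))
      = (univ : Finset (Fin n)).sup (sigmaF e G F k) := by
  refine aux_fix_of_le f ?_
  rw [Finset.comp_sup_eq_sup_comp (⇑f) (map_sup f) (map_bot f)]
  refine Finset.sup_le fun t _ => ?_
  rcases eq_or_ne t i with rfl | hti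
  · -- t = i
    have hσki : sigmaF e G F k t ≤ e t := aux_sigma_le e G F k t
    have hscj : sc e (f (sigmaF e G F k t)) j ≤ sigmaF e G F k j := by
      rcases eq_or_ne k t with rfl | hki
      · have h1 : sigmaF e G F k k = e k := by rw [sigmaF, if_pos rfl]
        rw [h1, hf.2.2.2.2.2, sigmaF, if_neg hij]
        exact le_sSup ⟨hx, ⟨f, hf, hfF⟩⟩
      · rcases eq_or_ne k j with rfl | hkj
        · have h1 : sigmaF e G F k k = e k := by rw [sigmaF, if_pos rfl]
          rw [h1]
          exact aux_sc_le e _ k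
        · obtain ⟨ts, hsub, hts⟩ :=
            (CompleteLattice.wellFoundedGT_iff_isSupFiniteCompact L).1 ‹WellFoundedGT L›
              {z | z ≤ e t ∧ (Hij e G k t z ∩ (F : Set (L ≃o L))).Nonempty}
          have hσ : sigmaF e G F k t = ts.sup id := by rw [sigmaF, if_neg hki]; exact hts
          have hkey : ∀ z ∈ ts, f z ≤ sigmaF e G F k j ⊔ hatE e j := by
            intro z hz
            obtain ⟨hzle, a', ha', ha'F⟩ := hsub hz
            refine (aux_supp hc.sup_eq_top (f z)).trans (Finset.sup_le fun r _ => ?_)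
            rcases eq_or_ne r t with rfl | hrt
            · rw [hf.2.2.1 z hzle]
              exact (hzle.trans (aux_le_hatE e hij)).trans le_sup_right
            · rcases eq_or_ne r j with rfl | hrj
              · exact (aux_core hc hHF hFG hki hkj hf hfF ha' ha'F).trans le_sup_left
              · exact ((aux_sc_mono e (f.monotone hzle) r).trans_eq
                  (hf.2.2.2.1 r hrt hrj)).trans bot_le
          have hfz : f (sigmaF e G F k t) ≤ sigmaF e G F k j ⊔ hatE e j := by
            rw [hσ, Finset.comp_sup_eq_sup_comp (⇑f) (map_sup f) (map_bot f)]
            exact Finset.sup_le fun z hz => hkey z hz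
          exact (aux_sc_mono e hfz j).trans_eq
            (aux_sc_sup_hat hc.indep (aux_sigma_le e G F k j))
    refine le_trans (aux_supp hc.sup_eq_top (f (sigmaF e G F k t))) ?_
    refine Finset.sup_mono_fun fun r _ => ?_
    rcases eq_or_ne r t with rfl | hrt
    · rw [hf.2.2.1 _ hσki]
    · rcases eq_or_ne r j with rfl | hrj
      · exact hscj
      · exact ((aux_sc_mono e (f.monotone hσki) r).trans_eq
          (hf.2.2.2.1 r hrt hrj)).trans bot_le
  · have h1 : f (sigmaF e G F k t) = sigmaF e G F k t :=
      hf.2.1 t hti _ (aux_sigma_le e G F k t)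
    calc (⇑f ∘ sigmaF e G F k) t = sigmaF e G F k t := h1
      _ ≤ _ := Finset.le_sup (mem_univ t)


/-- **Lemma 7.5 / Corollary 4 to Theorem 7.4.** In the setting of the paper with conditions
`1⁰`–`11⁰`, for any subgroup `F` with `H ≤ F ≤ G`, the groups `G(K(F))` and `F` contain
exactly the same transvections: for all `i ≠ j` and `x ≤ eⱼ`,
`H_{ij}(x) ∩ F = H_{ij}(x) ∩ G(K(F))`, where `K(F)` is the sublattice generated by `⊥` and
the elements `⨆ⱼ σ_{ij}(F)`. -/
theorem transvections_eq_of_KF {L : Type*} [CompleteLattice L] [IsModularLattice L]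
    [WellFoundedLT L] [WellFoundedGT L] {n : ℕ} (e : Fin n → L)
    (G F : Subgroup (L ≃o L)) (m : ℕ)
    (hc : PaperConditions e G m)
    (hHF : Hset e G ⊆ (F : Set (L ≃o L))) (hFG : F ≤ G) :
    ∀ i j : Fin n, i ≠ j → ∀ x, x ≤ e j →
      Hij e G i j x ∩ (F : Set (L ≃o L)) =
        Hij e G i j x ∩ GFix G (Kτ (sigmaF e G F)) := by
  intro i j hij x hx
  apply Set.eq_of_subset_of_subset
  · rintro f ⟨hf, hfF⟩
    refine ⟨hf, hf.1, ?_⟩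
    intro z hz
    refine Set.mem_sInter.1 hz {w : L | f w = w} ⟨?_, ?_⟩
    · rintro w (rfl | ⟨k, rfl⟩)
      · exact map_bot f
      · exact aux_fix_ck hc hHF hFG hij hx hf hfF k
    · intro a ha b hb
      simp only [Set.mem_setOf_eq] at ha hb ⊢
      exact ⟨by rw [map_sup, ha, hb], by rw [map_inf, ha, hb]⟩
  · rintro f ⟨hf, hfG, hfK⟩
    refine ⟨hf, ?_⟩
    have hcK : (univ : Finset (Fin n)).sup (sigmaF e G F i) ∈ Kτ (sigmaF e G F) :=
      Set.mem_sInter.2 fun T hT => hT.1 (Or.inr ⟨i, rfl⟩)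
    have hfc := hfK _ hcK
    have hei : e i ≤ univ.sup (sigmaF e G F i) := by
      have h1 := Finset.le_sup (f := sigmaF e G F i) (mem_univ i)
      rwa [show sigmaF e G F i i = e i by rw [sigmaF, if_pos rfl]] at h1
    have hfei : f (e i) ≤ univ.sup (sigmaF e G F i) := by
      calc f (e i) ≤ f (univ.sup (sigmaF e G F i)) := f.monotone hei
        _ = _ := hfc
    have hsup_le : univ.sup (sigmaF e G F i) ≤ sigmaF e G F i j ⊔ hatE e j := by
      refine Finset.sup_le fun t _ => ?_
      rcases eq_or_ne t j with rfl | htj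
      · exact le_sup_left
      · exact ((aux_sigma_le e G F i t).trans (aux_le_hatE e htj)).trans le_sup_right
    have hxσ : x ≤ sigmaF e G F i j := by
      have h1 : sc e (f (e i)) j ≤ sc e (sigmaF e G F i j ⊔ hatE e j) j :=
        aux_sc_mono e (hfei.trans hsup_le) j
      rwa [hf.2.2.2.2.2, aux_sc_sup_hat hc.indep (aux_sigma_le e G F i j)] at h1
    obtain ⟨ts, hsub, hts⟩ :=
      (CompleteLattice.wellFoundedGT_iff_isSupFiniteCompact L).1 ‹WellFoundedGT L›
        {z | z ≤ e j ∧ (Hij e G i j z ∩ (F : Set (L ≃o L))).Nonempty}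
    set xs : Fin ts.card → L := fun r => ((ts.equivFin.symm r : ts) : L) with hxs
    have hmem : ∀ r, xs r ∈
        {z | z ≤ e j ∧ (Hij e G i j z ∩ (F : Set (L ≃o L))).Nonempty} :=
      fun r => hsub (ts.equivFin.symm r).2
    choose a ha using fun r => (hmem r).2
    have hxsup : x ≤ univ.sup xs := by
      refine hxσ.trans ?_
      rw [sigmaF, if_neg hij, hts]
      refine Finset.sup_le fun b hb => ?_
      have hb' : xs (ts.equivFin ⟨b, hb⟩) = b := by simp [hxs]
      calc (id b : L) = xs (ts.equivFin ⟨b, hb⟩) := hb'.symm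
        _ ≤ _ := Finset.le_sup (mem_univ _)
    have hsubset := hc.c10 i j hij ts.card xs a (fun r => (ha r).1) x hxsup ⟨f, hf⟩
    have hclF : Subgroup.closure (Hset e G ∪ Set.range a) ≤ F :=
      (Subgroup.closure_le F).2
        (Set.union_subset hHF (by rintro g ⟨r, rfl⟩; exact (ha r).2))
    exact hclF (hsubset hf)
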